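/- Let ϱ be the right Haar measure and λ the left Haar measure on B°, with λ the pushforward of ds dt under (s,t) ↦ a(s)n(t) and ϱ(f) = ∫ f(b^{-1}) dλ(b) = ∫ f(a(s)n(t)) e^{2δ(s)} ds dt. For SL(2,ℝ), with B̂^C = {a(s)n(t) : s₁ < C} and B_T° = {b ∈ B° : ‖b‖ < T}, one has λ(B_T° \ B̂_T^C) = o(λ(B_T°)) as T → ∞, for every C ∈ ℝ. -/

import Mathlib

open MeasureTheory Real Filter Set

/-- Upper bound for the numerator region. -/
lemma num_bound (C T : ℝ) (hT : 0 < T) :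
    (volume {p : ℝ × ℝ |
        Real.exp (2 * p.1) * (1 + p.2 ^ 2) + Real.exp (-(2 * p.1)) < T ^ 2 ∧
        C ≤ p.1}).toReal ≤ 2 * Real.exp (-C) * T := by
  have hsub : {p : ℝ × ℝ |
      Real.exp (2 * p.1) * (1 + p.2 ^ 2) + Real.exp (-(2 * p.1)) < T ^ 2 ∧ C ≤ p.1}
      ⊆ regionBetween (fun s => -(T * Real.exp (-s))) (fun s => T * Real.exp (-s)) (Ici C) := by
    rintro ⟨s, t⟩ ⟨hlt, hC⟩
    have h1 : Real.exp (2 * s) * Real.exp (-(2 * s)) = 1 := by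
      rw [← Real.exp_add]; norm_num
    have h2 : Real.exp (-s) * Real.exp (-s) = Real.exp (-(2 * s)) := by
      rw [← Real.exp_add]; ring_nf
    have h3 : (0:ℝ) < Real.exp (2 * s) := Real.exp_pos _
    have h4 : (0:ℝ) < Real.exp (-s) := Real.exp_pos _
    refine ⟨hC, ?_, ?_⟩
    · simp only
      nlinarith [sq_nonneg (t + T * Real.exp (-s)), sq_nonneg t, mul_pos hT h4]
    · simp only
      nlinarith [sq_nonneg (t - T * Real.exp (-s)), sq_nonneg t, mul_pos hT h4]
  have hint : IntegrableOn (fun s : ℝ => T * Real.exp (-s)) (Ici C) := by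
    have h0 : IntegrableOn (fun s : ℝ => Real.exp (-s)) (Ioi C) := by
      simpa using exp_neg_integrableOn_Ioi C one_pos
    exact ((integrableOn_Ici_iff_integrableOn_Ioi (f := fun s : ℝ => Real.exp (-s)) (b := C)).2 h0).const_mul T
  have hcalc : volume (regionBetween (fun s => -(T * Real.exp (-s)))
      (fun s => T * Real.exp (-s)) (Ici C)) = ENNReal.ofReal (2 * Real.exp (-C) * T) := by
    rw [MeasureTheory.Measure.volume_eq_prod]
    have hintneg : IntegrableOn (fun s : ℝ => -(T * Real.exp (-s))) (Ici C) := hint.neg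
    rw [volume_regionBetween_eq_integral hintneg hint measurableSet_Ici
      (fun x _ => neg_le_self (by positivity))]
    congr 1
    simp only [Pi.sub_apply, sub_neg_eq_add]
    rw [MeasureTheory.integral_Ici_eq_integral_Ioi]
    have hint' : IntegrableOn (fun s : ℝ => T * Real.exp (-s)) (Ioi C) :=
      hint.mono_set Ioi_subset_Ici_self
    rw [integral_add hint' hint', integral_const_mul, integral_exp_neg_Ioi]
    ring
  refine ENNReal.toReal_le_of_le_ofReal (by positivity) ?_
  calc volume _ ≤ _ := measure_mono hsub
    _ = _ := hcalc

/-- Lower bound for the denominator region. -/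
lemma den_bound (T : ℝ) (hT : 2 * Real.exp 1 ≤ T) :
    ENNReal.ofReal ((T / 2) * (T * Real.exp (-1) - 1)) ≤
    volume {p : ℝ × ℝ |
        Real.exp (2 * p.1) * (1 + p.2 ^ 2) + Real.exp (-(2 * p.1)) < T ^ 2} := by
  have hE : (2.7182818283 : ℝ) < Real.exp 1 := Real.exp_one_gt_d9
  have hT0 : (0:ℝ) < T := by nlinarith [Real.exp_pos 1]
  have hlog : (1:ℝ) < Real.log T := by
    have : Real.exp 1 < T := by nlinarith
    calc (1:ℝ) = Real.log (Real.exp 1) := (Real.log_exp 1).symm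
      _ < Real.log T := Real.log_lt_log (Real.exp_pos 1) this
  have hsub : regionBetween (fun _ => (0:ℝ)) (fun s => (T / 2) * Real.exp (-s))
      (Ioc (1 - Real.log T) 0) ⊆ {p : ℝ × ℝ |
        Real.exp (2 * p.1) * (1 + p.2 ^ 2) + Real.exp (-(2 * p.1)) < T ^ 2} := by
    rintro ⟨s, t⟩ ⟨hs, ht⟩
    simp only [mem_Ioo] at ht
    simp only [mem_Ioc] at hs
    have h1 : Real.exp (2 * s) * Real.exp (-(2 * s)) = 1 := by
      rw [← Real.exp_add]; norm_num
    have h2 : Real.exp (-s) * Real.exp (-s) = Real.exp (-(2 * s)) := by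
      rw [← Real.exp_add]; ring_nf
    have h3 : Real.exp (2 * s) ≤ 1 := by
      rw [Real.exp_le_one_iff]; linarith [hs.2]
    have h4 : (0:ℝ) < Real.exp (-s) := Real.exp_pos _
    have h5 : (0:ℝ) < Real.exp (2 * s) := Real.exp_pos _
    -- exp(-s) < T * exp(-1)
    have h6 : Real.exp (-s) < T * Real.exp (-1) := by
      have : -s < Real.log T - 1 := by linarith [hs.1]
      calc Real.exp (-s) < Real.exp (Real.log T - 1) := Real.exp_lt_exp.2 this
        _ = T * Real.exp (-1) := by
            rw [Real.exp_sub, Real.exp_log hT0, Real.exp_neg]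
            rw [div_eq_mul_inv]
    have h7 : Real.exp (-1) * Real.exp 1 = 1 := by rw [← Real.exp_add]; norm_num
    have h8 : Real.exp (2 * s) * t ^ 2 < T ^ 2 / 4 := by
      have ht2 : t ^ 2 < ((T / 2) * Real.exp (-s)) ^ 2 := by
        have h0t : 0 < t := ht.1
        nlinarith [ht.2]
      have : Real.exp (2 * s) * t ^ 2 < Real.exp (2 * s) * ((T / 2) * Real.exp (-s)) ^ 2 :=
        by exact (mul_lt_mul_iff_right₀ h5).2 ht2
      calc Real.exp (2 * s) * t ^ 2 < Real.exp (2 * s) * ((T / 2) * Real.exp (-s)) ^ 2 := this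
        _ = T ^ 2 / 4 * (Real.exp (2 * s) * (Real.exp (-s) * Real.exp (-s))) := by ring
        _ = T ^ 2 / 4 := by rw [h2, h1]; ring
    have h9 : Real.exp (-(2 * s)) < T ^ 2 * Real.exp (-1) * Real.exp (-1) := by
      rw [← h2]
      nlinarith [h6, h4, Real.exp_pos (-1)]
    have hEp : (0:ℝ) < Real.exp (-1) := Real.exp_pos _
    have hEe : Real.exp (-1) < 1 / 2.7182818283 := by
      rw [Real.exp_neg, one_div]
      exact inv_strictAnti₀ (by norm_num) hE
    show Real.exp (2 * s) * (1 + t ^ 2) + Real.exp (-(2 * s)) < T ^ 2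
    have expand : Real.exp (2 * s) * (1 + t ^ 2) = Real.exp (2 * s) + Real.exp (2 * s) * t ^ 2 := by
      ring
    rw [expand]
    have hT2 : (2 * 2.7182818283 : ℝ) ≤ T := by nlinarith
    nlinarith [h8, h9, h3, hEe, hT2, sq_nonneg (Real.exp (-1)), mul_pos hT0 hEp]
  have hint : IntegrableOn (fun s : ℝ => (T / 2) * Real.exp (-s)) (Ioc (1 - Real.log T) 0) := by
    apply Continuous.integrableOn_Ioc
    continuity
  have hcalc : volume (regionBetween (fun _ => (0:ℝ)) (fun s => (T / 2) * Real.exp (-s))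
      (Ioc (1 - Real.log T) 0)) = ENNReal.ofReal ((T / 2) * (T * Real.exp (-1) - 1)) := by
    rw [MeasureTheory.Measure.volume_eq_prod]
    rw [volume_regionBetween_eq_integral
      (integrableOn_const measure_Ioc_lt_top.ne) hint measurableSet_Ioc
      (fun x _ => by positivity)]
    congr 1
    simp only [Pi.sub_apply, sub_zero]
    have hle : (1 - Real.log T) ≤ 0 := by linarith
    rw [← intervalIntegral.integral_of_le hle]
    rw [intervalIntegral.integral_const_mul]
    have : (∫ x in (1 - Real.log T)..0, Real.exp (-x))
        = Real.exp (Real.log T - 1) - 1 := by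
      rw [intervalIntegral.integral_comp_neg fun x => Real.exp x]
      rw [integral_exp]
      norm_num
    rw [this, Real.exp_sub, Real.exp_log hT0, Real.exp_neg]
    ring_nf
  calc ENNReal.ofReal ((T / 2) * (T * Real.exp (-1) - 1)) = _ := hcalc.symm
    _ ≤ _ := measure_mono hsub

theorem lattice_action_left_haar_concentration (C : ℝ) :
    Tendsto (fun T : ℝ =>
        (volume {p : ℝ × ℝ |
            Real.exp (2 * p.1) * (1 + p.2 ^ 2) + Real.exp (-(2 * p.1)) < T ^ 2 ∧
            C ≤ p.1}).toReal /
        (volume {p : ℝ × ℝ |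
            Real.exp (2 * p.1) * (1 + p.2 ^ 2) + Real.exp (-(2 * p.1)) < T ^ 2}).toReal)
      atTop (nhds 0) := by
  have hE : (2.7182818283 : ℝ) < Real.exp 1 := Real.exp_one_gt_d9
  set g : ℝ → ℝ := fun T => (4 * Real.exp (-C)) * (T * Real.exp (-1) - 1)⁻¹ with hg
  have hgtend : Tendsto g atTop (nhds 0) := by
    have h1 : Tendsto (fun T : ℝ => T * Real.exp (-1) - 1) atTop atTop := by
      have := tendsto_atTop_add_const_right atTop (-1 : ℝ)
        (Filter.tendsto_id.atTop_mul_const (Real.exp_pos (-1)))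
      simpa [sub_eq_add_neg] using this
    have := h1.inv_tendsto_atTop.const_mul (4 * Real.exp (-C))
    simpa [hg] using this
  apply squeeze_zero' (Eventually.of_forall fun T =>
    div_nonneg ENNReal.toReal_nonneg ENNReal.toReal_nonneg) _ hgtend
  filter_upwards [eventually_ge_atTop (2 * Real.exp 1)] with T hT
  have hT0 : (0:ℝ) < T := by nlinarith [Real.exp_pos 1]
  have hX : (1:ℝ) ≤ T * Real.exp (-1) - 1 := by
    have : (2:ℝ) ≤ T * Real.exp (-1) := by
      have h7 : Real.exp (-1) * Real.exp 1 = 1 := by rw [← Real.exp_add]; norm_num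
      nlinarith [Real.exp_pos (-1), Real.exp_pos 1]
    linarith
  have hXpos : (0:ℝ) < T * Real.exp (-1) - 1 := by linarith
  have hgTnn : 0 ≤ g T := by
    rw [hg]; positivity
  by_cases hden : volume {p : ℝ × ℝ |
      Real.exp (2 * p.1) * (1 + p.2 ^ 2) + Real.exp (-(2 * p.1)) < T ^ 2} = ⊤
  · rw [hden]
    simp [hgTnn]
  · have hLpos : (0:ℝ) < (T / 2) * (T * Real.exp (-1) - 1) := by positivity
    have hge := den_bound T hT
    have hdenR : (T / 2) * (T * Real.exp (-1) - 1) ≤ (volume {p : ℝ × ℝ |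
        Real.exp (2 * p.1) * (1 + p.2 ^ 2) + Real.exp (-(2 * p.1)) < T ^ 2}).toReal := by
      have := ENNReal.toReal_mono hden hge
      rwa [ENNReal.toReal_ofReal hLpos.le] at this
    have hnum := num_bound C T hT0
    calc _ ≤ (2 * Real.exp (-C) * T) / ((T / 2) * (T * Real.exp (-1) - 1)) :=
          div_le_div₀ (by positivity) hnum hLpos hdenR
      _ = g T := by
          rw [hg]
          field_simp
          ring
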